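/- Let X = ℝⁿ or X = [0,∞)ⁿ, let 𝒫 be a set of properties with scoring functions γ_p : ℝⁿ → ℝ, and suppose the strict epistemic pooling principle holds for Hadamard (componentwise product) pooling for all e, f ∈ X (for every p ∈ 𝒫, γ_p(e ⊙ f) > 0 ↔ γ_p(e) > 0 ∨ γ_p(f) > 0). For an index set I ⊆ {1,...,n}, define 𝒫_I = {p ∈ 𝒫 : every f ∈ X with f_i = 0 for all i ∈ I satisfies γ_p(f) > 0}. Then for all index sets I, J ⊆ {1,...,n}, it holds that 𝒫_{I ∪ J} = 𝒫_I ∪ 𝒫_J. -/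
import Mathlib


/-- For Hadamard pooling with X = ℝⁿ or X = [0,∞)ⁿ satisfying the strict
epistemic pooling principle, the map I ↦ 𝒫_I (with
𝒫_I = {p : every f ∈ X vanishing on I satisfies γ_p(f) > 0}) turns unions of index
sets into unions: 𝒫_{I ∪ J} = 𝒫_I ∪ 𝒫_J. -/
theorem had_pooling_index_union (n : ℕ) (P : Type*) (X : Set (Fin n → ℝ))
    (hX : X = Set.univ ∨ X = {x : Fin n → ℝ | ∀ i, 0 ≤ x i})
    (γ : P → (Fin n → ℝ) → ℝ)
    (hpool : ∀ e ∈ X, ∀ f ∈ X, ∀ p : P,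
      γ p (fun i => e i * f i) > 0 ↔ (γ p e > 0 ∨ γ p f > 0)) :
    ∀ I J : Set (Fin n),
      {p : P | ∀ f ∈ X, (∀ i ∈ I ∪ J, f i = 0) → γ p f > 0}
        = {p : P | ∀ f ∈ X, (∀ i ∈ I, f i = 0) → γ p f > 0}
          ∪ {p : P | ∀ f ∈ X, (∀ i ∈ J, f i = 0) → γ p f > 0} := by
  intro I J
  ext p
  simp only [Set.mem_setOf_eq, Set.mem_union]
  constructor
  · intro h
    by_contra hc
    push_neg at hc
    obtain ⟨⟨f, hfX, hfI, hf⟩, ⟨g, hgX, hgJ, hg⟩⟩ := hc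
    have hmem : (fun i => f i * g i) ∈ X := by
      rcases hX with h' | h' <;> subst h'
      · trivial
      · exact fun i => mul_nonneg (hfX i) (hgX i)
    have hz : ∀ i ∈ I ∪ J, f i * g i = 0 := by
      rintro i (hi | hi)
      · rw [hfI i hi, zero_mul]
      · rw [hgJ i hi, mul_zero]
    have := (hpool f hfX g hgX p).mp (h _ hmem hz)
    rcases this with h' | h'
    · exact absurd h' (not_lt.mpr hf)
    · exact absurd h' (not_lt.mpr hg)
  · rintro (h | h) f hfX hz
    · exact h f hfX fun i hi => hz i (Or.inl hi)
    · exact h f hfX fun i hi => hz i (Or.inr hi)
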